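/- Let (x_k)_{k≥0}, (α_k)_{k≥0}, (β_k)_{k≥0} be sequences of positive real numbers and let p, q ≥ 1 be reals. Suppose that for every k ≥ 0 at least one of the two inequalities holds: x_{k+1}^p ≤ α_k + x_k^p, or x_{k+1}^q ≤ β_k + x_k^q. Then for every k ≥ 0: x_{k+1} ≤ (Σ_{i=0}^{k} α_i)^{1/p} + (Σ_{i=0}^{k} β_i)^{1/q} + x_0. -/

import Mathlib

open Finset

private lemma rpow_diff_mono (p C : ℝ) (hp : 1 ≤ p) (hC : 0 ≤ C) :
    MonotoneOn (fun t : ℝ => (t + C) ^ p - t ^ p) (Set.Ici 0) := by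
  have hdiff : ∀ t : ℝ, HasDerivAt (fun t : ℝ => (t + C) ^ p - t ^ p)
      (p * (t + C) ^ (p - 1) * 1 - p * t ^ (p - 1)) t := by
    intro t
    have h1 : HasDerivAt (fun t : ℝ => (t + C) ^ p) (p * (t + C) ^ (p - 1) * 1) t :=
      (Real.hasDerivAt_rpow_const (Or.inr hp)).comp t ((hasDerivAt_id t).add_const C)
    have h2 : HasDerivAt (fun t : ℝ => t ^ p) (p * t ^ (p - 1)) t :=
      Real.hasDerivAt_rpow_const (Or.inr hp)
    exact h1.sub h2
  apply monotoneOn_of_deriv_nonneg (convex_Ici 0)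
  · exact fun t _ => (hdiff t).continuousAt.continuousWithinAt
  · exact fun t _ => (hdiff t).differentiableAt.differentiableWithinAt
  · intro t ht
    rw [interior_Ici] at ht
    rw [(hdiff t).deriv]
    have h0 : (0:ℝ) < p := lt_of_lt_of_le one_pos hp
    have : t ^ (p - 1) ≤ (t + C) ^ (p - 1) :=
      Real.rpow_le_rpow (le_of_lt ht) (by linarith) (by linarith)
    nlinarith

/-- One induction step: if `xk1 ^ p ≤ a + xk ^ p` and `xk ≤ A ^ (1/p) + c`, then
`xk1 ≤ (A + a) ^ (1/p) + c`. -/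
private lemma step_lemma (p A a c xk xk1 : ℝ) (hp : 1 ≤ p) (hA : 0 ≤ A) (ha : 0 ≤ a)
    (hc : 0 ≤ c) (hxk : 0 ≤ xk) (hxk1 : 0 ≤ xk1)
    (h1 : xk1 ^ p ≤ a + xk ^ p) (h2 : xk ≤ A ^ (1 / p) + c) :
    xk1 ≤ (A + a) ^ (1 / p) + c := by
  have hp0 : (0:ℝ) < p := lt_of_lt_of_le one_pos hp
  set u : ℝ := A ^ (1 / p) with hu_def
  set v : ℝ := (A + a) ^ (1 / p) with hv_def
  have hu : 0 ≤ u := Real.rpow_nonneg hA _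
  have hv : 0 ≤ v := Real.rpow_nonneg (by linarith) _
  have huv : u ≤ v := Real.rpow_le_rpow hA (by linarith) (by positivity)
  have hup : u ^ p = A := by
    rw [hu_def, ← Real.rpow_mul hA, one_div, inv_mul_cancel₀ hp0.ne', Real.rpow_one]
  have hvp : v ^ p = A + a := by
    rw [hv_def, ← Real.rpow_mul (by linarith), one_div, inv_mul_cancel₀ hp0.ne',
      Real.rpow_one]
  -- key monotonicity: (v + c)^p - v^p ≥ (u + c)^p - u^p
  have hmono : (u + c) ^ p - u ^ p ≤ (v + c) ^ p - v ^ p :=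
    rpow_diff_mono p c hp hc hu hv huv
  -- xk^p ≤ (u + c)^p
  have hxkp : xk ^ p ≤ (u + c) ^ p := Real.rpow_le_rpow hxk h2 hp0.le
  have hkey : xk1 ^ p ≤ (v + c) ^ p := by
    have := hmono
    rw [hup, hvp] at this
    linarith
  -- conclude by monotonicity of rpow
  by_contra hcon
  push_neg at hcon
  have : (v + c) ^ p < xk1 ^ p := Real.rpow_lt_rpow (by linarith) hcon hp0
  linarith

/-- Lemma 4: telescoping bound for a sequence satisfying, at each step,
at least one of two recursive power inequalities. -/
theorem telescoping_power_recursion (x α β : ℕ → ℝ)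
    (hx : ∀ k, 0 < x k) (hα : ∀ k, 0 < α k) (hβ : ∀ k, 0 < β k)
    (p q : ℝ) (hp : 1 ≤ p) (hq : 1 ≤ q)
    (hrec : ∀ k, x (k + 1) ^ p ≤ α k + x k ^ p ∨ x (k + 1) ^ q ≤ β k + x k ^ q) :
    ∀ k : ℕ, x (k + 1) ≤ (∑ i ∈ range (k + 1), α i) ^ (1 / p) +
      (∑ i ∈ range (k + 1), β i) ^ (1 / q) + x 0 := by
  have hp0 : (0:ℝ) < p := lt_of_lt_of_le one_pos hp
  have hq0 : (0:ℝ) < q := lt_of_lt_of_le one_pos hq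
  have hAnn : ∀ k, (0:ℝ) ≤ ∑ i ∈ range k, α i :=
    fun k => Finset.sum_nonneg fun i _ => (hα i).le
  have hBnn : ∀ k, (0:ℝ) ≤ ∑ i ∈ range k, β i :=
    fun k => Finset.sum_nonneg fun i _ => (hβ i).le
  have main : ∀ k : ℕ, x k ≤ (∑ i ∈ range k, α i) ^ (1 / p) +
      (∑ i ∈ range k, β i) ^ (1 / q) + x 0 := by
    intro k
    induction k with
    | zero =>
      simp only [range_zero, sum_empty]
      have h1 : (0:ℝ) ≤ (0:ℝ) ^ (1 / p) := Real.rpow_nonneg le_rfl _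
      have h2 : (0:ℝ) ≤ (0:ℝ) ^ (1 / q) := Real.rpow_nonneg le_rfl _
      linarith
    | succ k ih =>
      set A := ∑ i ∈ range k, α i with hA_def
      set B := ∑ i ∈ range k, β i with hB_def
      rw [Finset.sum_range_succ, Finset.sum_range_succ, ← hA_def, ← hB_def]
      rcases hrec k with h | h
      · -- p-step
        have step := step_lemma p A (α k) (B ^ (1 / q) + x 0) (x k) (x (k + 1)) hp
          (hAnn k) (hα k).le (by have := (hx 0).le; have := Real.rpow_nonneg (hBnn k) (1/q); linarith) (hx k).le (hx (k + 1)).le h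
          (by linarith [ih])
        have hB' : B ^ (1 / q) ≤ (B + β k) ^ (1 / q) :=
          Real.rpow_le_rpow (hBnn k) (by linarith [(hβ k).le]) (by positivity)
        linarith
      · -- q-step
        have step := step_lemma q B (β k) (A ^ (1 / p) + x 0) (x k) (x (k + 1)) hq
          (hBnn k) (hβ k).le (by have := (hx 0).le; have := Real.rpow_nonneg (hAnn k) (1/p); linarith) (hx k).le (hx (k + 1)).le h
          (by linarith [ih])
        have hA' : A ^ (1 / p) ≤ (A + α k) ^ (1 / p) :=
          Real.rpow_le_rpow (hAnn k) (by linarith [(hα k).le]) (by positivity)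
        linarith
  exact fun k => main (k + 1)
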